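/- With d > 0, corr(R_{t,t+H}, RV_{t−H,t}) → 2^{2d} − 1 as H → ∞, where R_{t,t+H} = Σ_{j=tm+1}^{(t+H)m} r_j and RV_{t−H,t} = Σ_{j=(t−H)m+1}^{tm} r_j², provided that cov(r_L, r_0²) ∼ C₁ γ_Z(L), cov(r_0, r_L) ∼ C₂ γ_Z(L), cov(r_0², r_L²) ∼ C₃ γ_Z(L) with C₁² = C₂ C₃, and γ_Z(L) ∼ c L^{2d−1} · (2d+1)/(4d). -/

import Mathlib

open MeasureTheory ProbabilityTheory Real Filter

open Finset
open scoped ENNReal NNReal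

/-- Covariance of two real random variables. -/
noncomputable def covar {Ω : Type*} [MeasurableSpace Ω] (μ : Measure Ω) (X Y : Ω → ℝ) : ℝ :=
  ∫ ω, X ω * Y ω ∂μ - (∫ ω, X ω ∂μ) * (∫ ω, Y ω ∂μ)

lemma aux_ratio_one (q : ℝ) :
    Tendsto (fun n : ℕ => ((n : ℝ) + 1) ^ q / (n : ℝ) ^ q) atTop (nhds 1) := by
  have h1 : Tendsto (fun n : ℕ => ((n : ℝ) + 1) / n) atTop (nhds 1) := by
    have h : Tendsto (fun n : ℕ => 1 + 1 / (n : ℝ)) atTop (nhds 1) := by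
      simpa using tendsto_const_nhds.add (tendsto_one_div_atTop_nhds_zero_nat (𝕜 := ℝ))
    refine h.congr' ?_
    filter_upwards [eventually_gt_atTop 0] with n hn
    have : (n : ℝ) ≠ 0 := by positivity
    field_simp
  have hc : ContinuousAt (fun x : ℝ => x ^ q) 1 :=
    Real.continuousAt_rpow_const 1 q (Or.inl one_ne_zero)
  have h2 : Tendsto (fun n : ℕ => (((n : ℝ) + 1) / n) ^ q) atTop (nhds 1) := by
    simpa [Function.comp_def] using hc.tendsto.comp h1
  refine h2.congr' ?_
  filter_upwards [eventually_gt_atTop 0] with n hn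
  rw [Real.div_rpow (by positivity) (by positivity)]

lemma rpow_nat_atTop (q : ℝ) (hq : 0 < q) :
    Tendsto (fun n : ℕ => (n : ℝ) ^ q) atTop atTop :=
  (tendsto_rpow_atTop hq).comp tendsto_natCast_atTop_atTop

lemma sum_rpow_asymp (p : ℝ) (hp : -1 < p) :
    Tendsto (fun n : ℕ => (∑ i ∈ Finset.range n, ((i : ℝ) + 1) ^ p) / (n : ℝ) ^ (p + 1))
      atTop (nhds (1 / (p + 1))) := by
  have hp1 : (0 : ℝ) < p + 1 := by linarith
  have key : ∀ n : ℕ, 1 ≤ n →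
      ((n : ℝ) ^ (p+1) - 1) / (p+1) ≤ (∑ i ∈ Finset.range n, ((i : ℝ) + 1) ^ p) ∧
      (∑ i ∈ Finset.range n, ((i : ℝ) + 1) ^ p) ≤ 1 + ((n : ℝ) + 1) ^ (p+1) / (p+1) := by
    intro n hn
    rcases le_or_gt p 0 with hple | hppos
    · have hant : ∀ M : ℝ, AntitoneOn (fun x : ℝ => x ^ p) (Set.Icc (1:ℝ) M) := by
        intro M x hx y hy hxy
        exact Real.rpow_le_rpow_of_nonpos (lt_of_lt_of_le one_pos hx.1) hxy hple
      constructor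
      · have hle := AntitoneOn.integral_le_sum (x₀ := (1:ℝ)) (a := n)
          (f := fun x : ℝ => x ^ p) (by simpa using hant (1 + (n:ℝ)))
        have hint : (∫ x in (1:ℝ)..(1 + (n:ℝ)), x ^ p)
            = ((1 + (n:ℝ)) ^ (p+1) - 1 ^ (p+1)) / (p+1) := integral_rpow (Or.inl hp)
        rw [hint] at hle
        have h1 : ((n : ℝ) ^ (p+1) - 1) / (p+1) ≤ ((1 + (n:ℝ)) ^ (p+1) - 1 ^ (p+1)) / (p+1) := by
          rw [Real.one_rpow]
          refine (div_le_div_iff_of_pos_right hp1).mpr ?_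
          have := Real.rpow_le_rpow (by positivity) (by linarith : (n:ℝ) ≤ 1 + n) hp1.le
          linarith
        refine h1.trans (hle.trans_eq ?_)
        apply Finset.sum_congr rfl
        intro i _
        ring_nf
      · obtain ⟨k, rfl⟩ : ∃ k, n = k + 1 := ⟨n - 1, by omega⟩
        rw [Finset.sum_range_succ']
        have hle := AntitoneOn.sum_le_integral (x₀ := (1:ℝ)) (a := k)
          (f := fun x : ℝ => x ^ p) (by simpa using hant (1 + (k:ℝ)))
        have hint : (∫ x in (1:ℝ)..(1 + (k:ℝ)), x ^ p)
            = ((1 + (k:ℝ)) ^ (p+1) - 1 ^ (p+1)) / (p+1) := integral_rpow (Or.inl hp)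
        rw [hint] at hle
        have h2 : ((1 + (k:ℝ)) ^ (p+1) - 1 ^ (p+1)) / (p+1)
            ≤ ((k:ℝ) + 1 + 1) ^ (p+1) / (p+1) := by
          rw [Real.one_rpow]
          refine (div_le_div_iff_of_pos_right hp1).mpr ?_
          have := Real.rpow_le_rpow (by positivity) (by linarith : 1 + (k:ℝ) ≤ (k:ℝ) + 1 + 1) hp1.le
          linarith
        push_cast at hle h2 ⊢
        simp only [Real.one_rpow] at hle h2 ⊢
        norm_num at hle h2 ⊢
        have hsum : ∑ x ∈ Finset.range k, ((x:ℝ) + 1 + 1) ^ p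
            = ∑ x ∈ Finset.range k, (1 + ((x:ℝ) + 1)) ^ p :=
          Finset.sum_congr rfl (fun i _ => by congr 1; ring)
        linarith [hsum]
    · have hmono : ∀ M : ℝ, MonotoneOn (fun x : ℝ => x ^ p) (Set.Icc (0:ℝ) M) := by
        intro M x hx y hy hxy
        exact Real.rpow_le_rpow hx.1 hxy hppos.le
      constructor
      · have hle := MonotoneOn.integral_le_sum (x₀ := (0:ℝ)) (a := n)
          (f := fun x : ℝ => x ^ p) (by simpa using hmono ((n:ℝ)))
        have hint : (∫ x in (0:ℝ)..(0 + (n:ℝ)), x ^ p)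
            = ((0 + (n:ℝ)) ^ (p+1) - 0 ^ (p+1)) / (p+1) := integral_rpow (Or.inl hp)
        rw [hint] at hle
        rw [Real.zero_rpow (by linarith)] at hle
        have heq : (∑ i ∈ Finset.range n, (fun x : ℝ => x ^ p) ((0:ℝ) + ((i : ℕ) + 1 : ℕ)))
            = ∑ i ∈ Finset.range n, ((i:ℝ) + 1) ^ p := by
          apply Finset.sum_congr rfl; intro i _; push_cast; ring_nf
        rw [heq] at hle
        refine le_trans ?_ hle
        rw [zero_add]
        refine (div_le_div_iff_of_pos_right hp1).mpr ?_
        linarith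
      · have hle := MonotoneOn.sum_le_integral (x₀ := (1:ℝ)) (a := n)
          (f := fun x : ℝ => x ^ p) (by
            have := hmono (1 + (n:ℝ))
            exact this.mono (Set.Icc_subset_Icc (by norm_num) le_rfl))
        have hint : (∫ x in (1:ℝ)..(1 + (n:ℝ)), x ^ p)
            = ((1 + (n:ℝ)) ^ (p+1) - 1 ^ (p+1)) / (p+1) := integral_rpow (Or.inl hp)
        rw [hint] at hle
        have heq : (∑ i ∈ Finset.range n, (fun x : ℝ => x ^ p) ((1:ℝ) + (i : ℕ)))
            = ∑ i ∈ Finset.range n, ((i:ℝ) + 1) ^ p := by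
          apply Finset.sum_congr rfl; intro i _; push_cast; ring_nf
        rw [heq] at hle
        refine hle.trans ?_
        rw [Real.one_rpow]
        have h3 : (1 + (n:ℝ)) ^ (p+1) = ((n:ℝ) + 1) ^ (p+1) := by ring_nf
        rw [h3]
        have : (0:ℝ) < p + 1 := hp1
        have h4 : (0:ℝ) ≤ ((n:ℝ)+1)^(p+1) := Real.rpow_nonneg (by positivity) _
        rw [sub_div]
        have : 1 / (p+1) ≥ 0 := by positivity
        linarith
  -- squeeze
  have hLlim : Tendsto (fun n : ℕ => (((n:ℝ) ^ (p+1) - 1) / (p+1)) / (n:ℝ) ^ (p+1))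
      atTop (nhds (1/(p+1))) := by
    have hinv : Tendsto (fun n : ℕ => ((n:ℝ) ^ (p+1))⁻¹) atTop (nhds 0) :=
      (rpow_nat_atTop _ hp1).inv_tendsto_atTop
    have : Tendsto (fun n : ℕ => (1 - ((n:ℝ) ^ (p+1))⁻¹) / (p+1)) atTop (nhds ((1 - 0)/(p+1))) :=
      (tendsto_const_nhds.sub hinv).div_const _
    simp only [sub_zero] at this
    refine this.congr' ?_
    filter_upwards [eventually_gt_atTop 0] with n hn
    have hne : ((n:ℝ) ^ (p+1)) ≠ 0 :=
      (Real.rpow_pos_of_pos (by positivity) _).ne'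
    have heq : ((n:ℝ)^(p+1) - 1)/(p+1) / ((n:ℝ)^(p+1)) = (1 - ((n:ℝ)^(p+1))⁻¹)/(p+1) := by
      rw [div_div, mul_comm (p+1) ((n:ℝ)^(p+1)), ← div_div, sub_div, div_self hne, one_div]
    exact heq.symm
  have hUlim : Tendsto (fun n : ℕ => (1 + ((n:ℝ)+1) ^ (p+1) / (p+1)) / (n:ℝ) ^ (p+1))
      atTop (nhds (1/(p+1))) := by
    have hinv : Tendsto (fun n : ℕ => ((n:ℝ) ^ (p+1))⁻¹) atTop (nhds 0) :=
      (rpow_nat_atTop _ hp1).inv_tendsto_atTop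
    have h2 := (aux_ratio_one (p+1)).div_const (p+1)
    have : Tendsto (fun n : ℕ => ((n:ℝ) ^ (p+1))⁻¹ + (((n:ℝ)+1)^(p+1) / (n:ℝ)^(p+1)) / (p+1))
        atTop (nhds (0 + 1/(p+1))) := hinv.add h2
    rw [zero_add] at this
    refine this.congr' ?_
    filter_upwards [eventually_gt_atTop 0] with n hn
    have hne : ((n:ℝ) ^ (p+1)) ≠ 0 :=
      (Real.rpow_pos_of_pos (by positivity) _).ne'
    have heq : (1 + ((n:ℝ)+1)^(p+1)/(p+1)) / ((n:ℝ)^(p+1))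
        = ((n:ℝ)^(p+1))⁻¹ + (((n:ℝ)+1)^(p+1) / (n:ℝ)^(p+1)) / (p+1) := by
      rw [add_div, one_div, div_div, mul_comm (p+1) ((n:ℝ)^(p+1)), ← div_div]
    exact heq.symm
  refine tendsto_of_tendsto_of_tendsto_of_le_of_le' hLlim hUlim ?_ ?_
  · filter_upwards [eventually_ge_atTop 1] with n hn
    exact (div_le_div_iff_of_pos_right (Real.rpow_pos_of_pos (by positivity) _)).mpr ((key n hn).1)
  · filter_upwards [eventually_ge_atTop 1] with n hn
    exact (div_le_div_iff_of_pos_right (Real.rpow_pos_of_pos (by positivity) _)).mpr ((key n hn).2)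

lemma sum_rpow_atTop (p : ℝ) (hp : -1 < p) :
    Tendsto (fun n : ℕ => ∑ i ∈ Finset.range n, ((i : ℝ) + 1) ^ p) atTop atTop := by
  have hp1 : (0:ℝ) < p + 1 := by linarith
  have h := (sum_rpow_asymp p hp).pos_mul_atTop (by positivity) (rpow_nat_atTop (p+1) hp1)
  refine h.congr' ?_
  filter_upwards [eventually_gt_atTop 0] with n hn
  have hne : ((n:ℝ) ^ (p+1)) ≠ 0 := (Real.rpow_pos_of_pos (by positivity) _).ne'
  field_simp

lemma karamata (p A : ℝ) (hp : -1 < p) (b : ℕ → ℝ)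
    (hb : Tendsto (fun i : ℕ => b i / ((i : ℝ) + 1) ^ p) atTop (nhds A)) :
    Tendsto (fun n : ℕ => (∑ i ∈ Finset.range n, b i) / (n : ℝ) ^ (p + 1))
      atTop (nhds (A / (p + 1))) := by
  have hp1 : (0:ℝ) < p + 1 := by linarith
  set g : ℕ → ℝ := fun i => ((i : ℝ) + 1) ^ p with hg
  have hgpos : ∀ i, 0 < g i := fun i => Real.rpow_pos_of_pos (by positivity) _
  have hG := sum_rpow_asymp p hp
  have hGtop := sum_rpow_atTop p hp
  have hlo : (fun i => b i - A * g i) =o[atTop] g := by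
    rw [Asymptotics.isLittleO_iff_tendsto (fun i h => absurd h (hgpos i).ne')]
    have : Tendsto (fun i : ℕ => b i / g i - A) atTop (nhds (A - A)) :=
      hb.sub_const A
    rw [sub_self] at this
    refine this.congr fun i => ?_
    field_simp [(hgpos i).ne']
  have hsum := hlo.sum_range (fun i => (hgpos i).le) hGtop
  have hzero : Tendsto (fun n : ℕ =>
      (∑ i ∈ Finset.range n, (b i - A * g i)) / (n : ℝ) ^ (p+1)) atTop (nhds 0) := by
    have h1 := hsum.tendsto_div_nhds_zero
    have h2 := h1.mul hG
    rw [zero_mul] at h2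
    refine h2.congr' ?_
    filter_upwards [eventually_ge_atTop 1] with n hn
    have hGpos : 0 < ∑ i ∈ Finset.range n, g i :=
      Finset.sum_pos (fun i _ => hgpos i) (Finset.nonempty_range_iff.mpr (by omega))
    field_simp
    rfl
  have hmain : Tendsto (fun n : ℕ =>
      A * ((∑ i ∈ Finset.range n, g i) / (n : ℝ) ^ (p+1))
        + (∑ i ∈ Finset.range n, (b i - A * g i)) / (n : ℝ) ^ (p+1))
      atTop (nhds (A * (1/(p+1)) + 0)) := (hG.const_mul A).add hzero
  rw [add_zero] at hmain
  have : A * (1/(p+1)) = A / (p+1) := by ring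
  rw [this] at hmain
  refine hmain.congr fun n => ?_
  rw [Finset.sum_sub_distrib, ← Finset.mul_sum]
  ring

lemma aux_ratio_one' (q : ℝ) :
    Tendsto (fun n : ℕ => (n : ℝ) ^ q / ((n : ℝ) + 1) ^ q) atTop (nhds 1) := by
  have h := (aux_ratio_one q).inv₀ one_ne_zero
  rw [inv_one] at h
  refine h.congr fun n => ?_
  rw [inv_div]

lemma tendsto_div_succ_rpow {u : ℕ → ℝ} {q B : ℝ} (hq : 0 < q)
    (h : Tendsto (fun n : ℕ => u n / (n : ℝ) ^ q) atTop (nhds B)) :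
    Tendsto (fun n : ℕ => u n / ((n : ℝ) + 1) ^ q) atTop (nhds B) := by
  have h2 := h.mul (aux_ratio_one' q)
  rw [mul_one] at h2
  refine h2.congr' ?_
  filter_upwards [eventually_gt_atTop 0] with n hn
  have h0 : ((n : ℝ)) ^ q ≠ 0 := (Real.rpow_pos_of_pos (by positivity) _).ne'
  have h1 : ((n : ℝ) + 1) ^ q ≠ 0 := (Real.rpow_pos_of_pos (by positivity) _).ne'
  field_simp

lemma karamata2 (p A : ℝ) (hp : -1 < p) (b : ℕ → ℝ)
    (hb : Tendsto (fun i : ℕ => b i / ((i : ℝ) + 1) ^ p) atTop (nhds A)) :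
    Tendsto (fun n : ℕ => (∑ k ∈ Finset.range n, ∑ i ∈ Finset.range k, b i) / (n : ℝ) ^ (p + 2))
      atTop (nhds (A / ((p + 1) * (p + 2)))) := by
  have hp1 : (0:ℝ) < p + 1 := by linarith
  have h1 := karamata p A hp b hb
  have h1' := tendsto_div_succ_rpow hp1 h1
  have h2 := karamata (p+1) (A/(p+1)) (by linarith) (fun k => ∑ i ∈ Finset.range k, b i) h1'
  rw [show p+1+1 = p+2 by ring] at h2
  rw [show A/(p+1)/(p+2) = A/((p+1)*(p+2)) by rw [div_div]] at h2
  exact h2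

lemma tendsto_double_atTop : Tendsto (fun n : ℕ => 2 * n) atTop atTop :=
  tendsto_atTop_mono (fun n => by simp only [id_eq]; omega) tendsto_id

lemma numerator_asymp (p A : ℝ) (hp : -1 < p) (a : ℕ → ℝ)
    (ha : Tendsto (fun i : ℕ => a (i+1) / ((i : ℝ) + 1) ^ p) atTop (nhds A)) :
    Tendsto (fun n : ℕ =>
        (∑ i ∈ Finset.range n, ∑ k ∈ Finset.range n, a (i + k + 1)) / (n : ℝ) ^ (p + 2))
      atTop (nhds (A * ((2:ℝ) ^ (p+2) - 2) / ((p + 1) * (p + 2)))) := by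
  set b : ℕ → ℝ := fun i => a (i + 1) with hbdef
  set T : ℕ → ℝ := fun n => ∑ k ∈ Finset.range n, ∑ i ∈ Finset.range k, b i with hTdef
  have hident : ∀ n : ℕ,
      (∑ i ∈ Finset.range n, ∑ k ∈ Finset.range n, a (i + k + 1)) = T (2*n) - 2 * T n := by
    intro n
    have hinner : ∀ i : ℕ, (∑ k ∈ Finset.range n, a (i + k + 1))
        = (∑ j ∈ Finset.range (i+n), b j) - (∑ j ∈ Finset.range i, b j) := by
      intro i
      rw [← Finset.sum_Ico_eq_sub _ (by omega : i ≤ i + n), Finset.sum_Ico_eq_sum_range]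
      apply Finset.sum_congr (by congr 1; omega)
      intro k _
      simp only [hbdef]
    rw [Finset.sum_congr rfl (fun i _ => hinner i), Finset.sum_sub_distrib]
    have h2 : (∑ i ∈ Finset.range n, ∑ j ∈ Finset.range (i+n), b j)
        = ∑ i ∈ Finset.Ico n (2*n), ∑ j ∈ Finset.range i, b j := by
      rw [Finset.sum_Ico_eq_sum_range]
      apply Finset.sum_congr (by congr 1; omega)
      intro k _
      rw [Nat.add_comm k n]
    rw [h2, Finset.sum_Ico_eq_sub _ (by omega : n ≤ 2*n)]
    simp only [hTdef]
    ring
  have hT := karamata2 p A hp b ha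
  have hT2 : Tendsto (fun n : ℕ => T (2*n) / (n:ℝ)^(p+2))
      atTop (nhds (A / ((p+1)*(p+2)) * 2 ^ (p+2))) := by
    have hc := hT.comp tendsto_double_atTop
    have hmul := hc.mul_const ((2:ℝ)^(p+2))
    refine hmul.congr' ?_
    filter_upwards [eventually_gt_atTop 0] with n hn
    have e : ((2*n : ℕ):ℝ)^(p+2) = 2^(p+2) * (n:ℝ)^(p+2) := by
      push_cast
      rw [Real.mul_rpow (by norm_num) (by positivity)]
    simp only [Function.comp]
    rw [e]
    have h2q : ((2:ℝ))^(p+2) ≠ 0 := (Real.rpow_pos_of_pos (by norm_num) _).ne'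
    have hnq : ((n:ℝ))^(p+2) ≠ 0 := (Real.rpow_pos_of_pos (by positivity) _).ne'
    field_simp
    ring
  have hfinal := hT2.sub ((hT.const_mul 2).mul_const 1)
  have hlim : Tendsto (fun n : ℕ => (T (2*n) - 2 * T n) / (n:ℝ)^(p+2))
      atTop (nhds (A / ((p+1)*(p+2)) * 2 ^ (p+2) - 2 * (A / ((p+1)*(p+2))))) := by
    have := hT2.sub (hT.const_mul 2)
    refine this.congr fun n => ?_
    rw [sub_div]
    ring
  have e3 : A / ((p+1)*(p+2)) * 2 ^ (p+2) - 2 * (A / ((p+1)*(p+2)))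
      = A * ((2:ℝ) ^ (p+2) - 2) / ((p + 1) * (p + 2)) := by ring
  rw [e3] at hlim
  refine hlim.congr fun n => ?_
  rw [hident n]

lemma variance_asymp (p A : ℝ) (hp : -1 < p) (a : ℕ → ℝ)
    (ha : Tendsto (fun i : ℕ => a (i+1) / ((i : ℝ) + 1) ^ p) atTop (nhds A)) :
    Tendsto (fun n : ℕ =>
        (∑ i ∈ Finset.range n, ∑ k ∈ Finset.range n, a (max i k - min i k)) / (n : ℝ) ^ (p + 2))
      atTop (nhds (2 * A / ((p + 1) * (p + 2)))) := by
  have hp1 : (0:ℝ) < p + 1 := by linarith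
  set b : ℕ → ℝ := fun i => a (i + 1) with hbdef
  set T : ℕ → ℝ := fun n => ∑ k ∈ Finset.range n, ∑ i ∈ Finset.range k, b i with hTdef
  have hrow : ∀ n i : ℕ, i < n → (∑ k ∈ Finset.range i, a (max i k - min i k))
      = ∑ j ∈ Finset.range i, b j := by
    intro n i _
    rw [← Finset.sum_range_reflect (fun j => b j) i]
    apply Finset.sum_congr rfl
    intro k hk
    simp only [Finset.mem_range] at hk
    simp only [hbdef]
    congr 1
    omega
  have hident : ∀ n : ℕ,
      (∑ i ∈ Finset.range n, ∑ k ∈ Finset.range n, a (max i k - min i k))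
      = n * a 0 + 2 * T n := by
    intro n
    induction n with
    | zero => simp [hTdef]
    | succ n ih =>
      rw [Finset.sum_range_succ]
      have hsplit : ∀ i ∈ Finset.range n,
          (∑ k ∈ Finset.range (n+1), a (max i k - min i k))
          = (∑ k ∈ Finset.range n, a (max i k - min i k)) + a (n - i) := by
        intro i hi
        simp only [Finset.mem_range] at hi
        rw [Finset.sum_range_succ]
        congr 2
        omega
      rw [Finset.sum_congr rfl hsplit, Finset.sum_add_distrib, ih]
      have hlast : (∑ k ∈ Finset.range (n+1), a (max n k - min n k))
          = (∑ k ∈ Finset.range n, a (n - k)) + a 0 := by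
        rw [Finset.sum_range_succ]
        have e0 : max n n - min n n = 0 := by omega
        rw [e0]
        congr 1
        apply Finset.sum_congr rfl
        intro k hk
        simp only [Finset.mem_range] at hk
        congr 1
        omega
      rw [hlast]
      have hrow1 : (∑ i ∈ Finset.range n, a (n - i)) = ∑ j ∈ Finset.range n, b j := by
        rw [← Finset.sum_range_reflect (fun j => b j) n]
        apply Finset.sum_congr rfl
        intro k hk
        simp only [Finset.mem_range] at hk
        simp only [hbdef]
        congr 1
        omega
      have hrow2 : (∑ i ∈ Finset.range n, a (n - i)) = ∑ i ∈ Finset.range n, a (n - i) := rfl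
      have hTsucc : T (n+1) = T n + ∑ j ∈ Finset.range n, b j := by
        simp only [hTdef]
        rw [Finset.sum_range_succ]
      rw [hTsucc]
      rw [hrow1]
      push_cast
      ring
  have hT := karamata2 p A hp b ha
  have hsmall : Tendsto (fun n : ℕ => (n : ℝ) * a 0 / (n:ℝ)^(p+2)) atTop (nhds 0) := by
    have hinv : Tendsto (fun n : ℕ => ((n:ℝ) ^ (p+1))⁻¹) atTop (nhds 0) :=
      (rpow_nat_atTop _ hp1).inv_tendsto_atTop
    have := hinv.mul_const (a 0)
    rw [zero_mul] at this
    refine this.congr' ?_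
    filter_upwards [eventually_gt_atTop 0] with n hn
    have hnpos : (0:ℝ) < (n:ℝ) := by positivity
    have e : (n:ℝ)^(p+2) = (n:ℝ)^(p+1) * (n:ℝ) := by
      have h := Real.rpow_add hnpos (p+1) 1
      rw [Real.rpow_one] at h
      rw [show p+2 = p+1+1 by ring, h]
    rw [e]
    have h1 : (n:ℝ)^(p+1) ≠ 0 := (Real.rpow_pos_of_pos hnpos _).ne'
    field_simp
  have hmain := hsmall.add ((hT.const_mul 2))
  rw [zero_add] at hmain
  have e2 : 2 * (A / ((p+1)*(p+2))) = 2 * A / ((p+1)*(p+2)) := by ring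
  rw [e2] at hmain
  refine hmain.congr fun n => ?_
  rw [hident n]
  rw [add_div]
  ring


section CovLemmas

variable {Ω : Type*} [MeasurableSpace Ω] {μ : Measure Ω} [IsProbabilityMeasure μ]

lemma covar_comm (X Y : Ω → ℝ) : covar μ X Y = covar μ Y X := by
  unfold covar
  simp_rw [mul_comm (X _) (Y _)]
  ring

lemma ennreal_half : (1 : ℝ≥0∞) / 1 = 1/2 + 1/2 := by
  norm_num [ENNReal.div_add_div_same, ENNReal.div_self]
  exact ENNReal.inv_two_add_inv_two.symm

lemma ennreal_quarter : (1 : ℝ≥0∞) / 2 = 1/4 + 1/4 := by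
  rw [ENNReal.div_add_div_same]
  rw [ENNReal.div_eq_div_iff] <;> norm_num

lemma memℒp_sq {f : Ω → ℝ} (hf : MemLp f 4 μ) : MemLp (fun ω => (f ω)^2) 2 μ := by
  have h := hf.smul (φ := f) hf (hpqr := ⟨by simp only [← one_div]; exact ennreal_quarter.symm⟩)
  have heq : (f • f) = (fun ω => (f ω)^2) := by
    funext ω
    simp [Pi.smul_apply', smul_eq_mul, sq]
  rwa [heq] at h

lemma integrable_mul_of_L2 {f g : Ω → ℝ} (hf : MemLp f 2 μ) (hg : MemLp g 2 μ) :
    Integrable (fun ω => f ω * g ω) μ := by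
  have h := hg.smul (φ := f) hf (hpqr := ⟨by rw [inv_one]; exact ENNReal.inv_two_add_inv_two⟩)
  have heq : (f • g) = (fun ω => f ω * g ω) := by
    funext ω
    simp [Pi.smul_apply', smul_eq_mul]
  rw [heq] at h
  exact memLp_one_iff_integrable.mp h

lemma covar_sum_sum {ι κ : Type*} (s : Finset ι) (t : Finset κ)
    (X : ι → Ω → ℝ) (Y : κ → Ω → ℝ)
    (hX : ∀ i ∈ s, MemLp (X i) 2 μ) (hY : ∀ k ∈ t, MemLp (Y k) 2 μ) :
    covar μ (fun ω => ∑ i ∈ s, X i ω) (fun ω => ∑ k ∈ t, Y k ω)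
      = ∑ i ∈ s, ∑ k ∈ t, covar μ (X i) (Y k) := by
  have hXY : ∀ i ∈ s, ∀ k ∈ t, Integrable (fun ω => X i ω * Y k ω) μ :=
    fun i hi k hk => integrable_mul_of_L2 (hX i hi) (hY k hk)
  have hXi : ∀ i ∈ s, Integrable (X i) μ := fun i hi => (hX i hi).integrable one_le_two
  have hYk : ∀ k ∈ t, Integrable (Y k) μ := fun k hk => (hY k hk).integrable one_le_two
  unfold covar
  have h1 : (∫ ω, (∑ i ∈ s, X i ω) * (∑ k ∈ t, Y k ω) ∂μ)
      = ∑ i ∈ s, ∑ k ∈ t, ∫ ω, X i ω * Y k ω ∂μ := by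
    have he : ∀ ω, (∑ i ∈ s, X i ω) * (∑ k ∈ t, Y k ω)
        = ∑ i ∈ s, ∑ k ∈ t, X i ω * Y k ω := fun ω => by rw [Finset.sum_mul_sum]
    rw [MeasureTheory.integral_congr_ae (Eventually.of_forall he)]
    rw [MeasureTheory.integral_finset_sum s
      (fun i hi => MeasureTheory.integrable_finset_sum t (fun k hk => hXY i hi k hk))]
    exact Finset.sum_congr rfl fun i hi =>
      MeasureTheory.integral_finset_sum t (fun k hk => hXY i hi k hk)
  have h2 : (∫ ω, (∑ i ∈ s, X i ω) ∂μ) = ∑ i ∈ s, ∫ ω, X i ω ∂μ :=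
    MeasureTheory.integral_finset_sum s hXi
  have h3 : (∫ ω, (∑ k ∈ t, Y k ω) ∂μ) = ∑ k ∈ t, ∫ ω, Y k ω ∂μ :=
    MeasureTheory.integral_finset_sum t hYk
  rw [h1, h2, h3, Finset.sum_mul_sum]
  rw [← Finset.sum_sub_distrib]
  exact Finset.sum_congr rfl fun i _ => by rw [← Finset.sum_sub_distrib]

end CovLemmas

lemma sum_Ioc_shift_up (n : ℕ) (A : ℤ) (f : ℤ → ℝ) :
    ∑ j ∈ Finset.Ioc A (A + (n : ℤ)), f j = ∑ i ∈ Finset.range n, f (A + 1 + (i : ℤ)) := by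
  have hset : Finset.Ioc A (A + (n:ℤ))
      = (Finset.range n).map ⟨fun i : ℕ => A + 1 + (i:ℤ), fun a b h => by
          simp only at h; omega⟩ := by
    ext j
    simp only [Finset.mem_Ioc, Finset.mem_map, Finset.mem_range, Function.Embedding.coeFn_mk]
    constructor
    · rintro ⟨hj1, hj2⟩
      exact ⟨(j - A - 1).toNat, by omega, by show A + 1 + (((j - A - 1).toNat : ℕ) : ℤ) = j; omega⟩
    · rintro ⟨i, hi, rfl⟩
      show A < A + 1 + (i:ℤ) ∧ A + 1 + (i:ℤ) ≤ A + (n:ℤ)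
      omega
  rw [hset, Finset.sum_map]
  rfl

lemma sum_Ioc_shift_down (n : ℕ) (A : ℤ) (f : ℤ → ℝ) :
    ∑ j ∈ Finset.Ioc (A - (n : ℤ)) A, f j = ∑ i ∈ Finset.range n, f (A - (i : ℤ)) := by
  have hset : Finset.Ioc (A - (n:ℤ)) A
      = (Finset.range n).map ⟨fun i : ℕ => A - (i:ℤ), fun a b h => by
          simp only at h; omega⟩ := by
    ext j
    simp only [Finset.mem_Ioc, Finset.mem_map, Finset.mem_range, Function.Embedding.coeFn_mk]
    constructor
    · rintro ⟨hj1, hj2⟩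
      exact ⟨(A - j).toNat, by omega, by show A - (((A - j).toNat : ℕ) : ℤ) = j; omega⟩
    · rintro ⟨i, hi, rfl⟩
      show A - (n:ℤ) < A - (i:ℤ) ∧ A - (i:ℤ) ≤ A
      omega
  rw [hset, Finset.sum_map]
  rfl



/-- With `d > 0`, `corr(R_{t,t+H}, RV_{t-H,t}) → 2^{2d} - 1` as `H → ∞`,
where `R_{t,t+H} = Σ_{j=tm+1}^{(t+H)m} r_j` and `RV_{t-H,t} = Σ_{j=(t-H)m+1}^{tm} r_j²`,
provided `cov(r_L, r_0²) ∼ C₁ γ_Z(L)`, `cov(r_0, r_L) ∼ C₂ γ_Z(L)`,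
`cov(r_0², r_L²) ∼ C₃ γ_Z(L)` with `C₁² = C₂ C₃`, and
`γ_Z(L) ∼ c L^{2d-1} (2d+1)/(4d)`. -/
theorem long_run_correlation_limit
    {Ω : Type*} [MeasurableSpace Ω] (μ : Measure Ω) [IsProbabilityMeasure μ]
    (r : ℤ → Ω → ℝ) (d c : ℝ) (hd1 : 0 < d) (hd2 : d < 1/2) (hc : 0 < c)
    (m : ℕ) (hm : 0 < m)
    (hL4 : ∀ t, MemLp (r t) 4 μ)
    -- stationarity of the second-order structure:
    (hstat1 : ∀ s a b : ℤ, covar μ (r (a+s)) (r (b+s)) = covar μ (r a) (r b))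
    (hstat2 : ∀ s a b : ℤ, covar μ (fun ω => (r (a+s) ω)^2) (fun ω => (r (b+s) ω)^2)
      = covar μ (fun ω => (r a ω)^2) (fun ω => (r b ω)^2))
    (hstat3 : ∀ s a b : ℤ, covar μ (r (a+s)) (fun ω => (r (b+s) ω)^2)
      = covar μ (r a) (fun ω => (r b ω)^2))
    (γZ : ℕ → ℝ) (C₁ C₂ C₃ : ℝ) (hCsq : C₁^2 = C₂ * C₃)
    (hC1 : 0 < C₁) (hC2 : 0 < C₂) (hC3 : 0 < C₃)
    (h1 : Tendsto (fun L : ℕ =>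
      covar μ (r L) (fun ω => (r 0 ω)^2) / γZ L) atTop (nhds C₁))
    (h2 : Tendsto (fun L : ℕ => covar μ (r 0) (r L) / γZ L) atTop (nhds C₂))
    (h3 : Tendsto (fun L : ℕ =>
      covar μ (fun ω => (r 0 ω)^2) (fun ω => (r L ω)^2) / γZ L) atTop (nhds C₃))
    (hγZ : Tendsto (fun L : ℕ =>
      γZ L / (c * (L : ℝ) ^ (2*d - 1) * ((2*d+1)/(4*d)))) atTop (nhds 1)) :
    ∀ t : ℤ, Tendsto (fun H : ℕ =>
        covar μ (fun ω => ∑ j ∈ Finset.Ioc (t * (m : ℤ)) ((t + (H : ℤ)) * (m : ℤ)), r j ω)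
                (fun ω => ∑ j ∈ Finset.Ioc ((t - (H : ℤ)) * (m : ℤ)) (t * (m : ℤ)), (r j ω)^2)
          / Real.sqrt
              ((covar μ
                  (fun ω => ∑ j ∈ Finset.Ioc (t * (m : ℤ)) ((t + (H : ℤ)) * (m : ℤ)), r j ω)
                  (fun ω => ∑ j ∈ Finset.Ioc (t * (m : ℤ)) ((t + (H : ℤ)) * (m : ℤ)), r j ω))
                * (covar μ
                    (fun ω => ∑ j ∈ Finset.Ioc ((t - (H : ℤ)) * (m : ℤ)) (t * (m : ℤ)), (r j ω)^2)
                    (fun ω => ∑ j ∈ Finset.Ioc ((t - (H : ℤ)) * (m : ℤ)) (t * (m : ℤ)), (r j ω)^2))))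
      atTop (nhds ((2 : ℝ) ^ (2*d) - 1)) := by
  intro t
  have hd0 : (0:ℝ) < 2*d := by linarith
  set p : ℝ := 2*d - 1 with hpdef
  have hp : -1 < p := by rw [hpdef]; linarith
  have hp1pos : (0:ℝ) < p + 1 := by rw [hpdef]; linarith
  have hp2pos : (0:ℝ) < p + 2 := by rw [hpdef]; linarith
  set c' : ℝ := c * ((2*d+1)/(4*d)) with hc'def
  have hc' : 0 < c' := mul_pos hc (div_pos (by linarith) (by linarith))
  have hk0 : (2*d+1)/(4*d) ≠ 0 := (div_pos (by linarith) (by linarith)).ne'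
  -- γZ asymptotics against L^p
  have hγZ' : Tendsto (fun L : ℕ => γZ L / (L:ℝ)^p) atTop (nhds c') := by
    have h := hγZ.mul_const c'
    rw [one_mul] at h
    refine h.congr' ?_
    filter_upwards [eventually_ge_atTop 1] with L hL
    have hLpos : (0:ℝ) < (L:ℝ) := by exact_mod_cast Nat.lt_of_lt_of_le Nat.zero_lt_one hL
    have hLp : ((L:ℝ))^p ≠ 0 := (Real.rpow_pos_of_pos hLpos _).ne'
    rw [hc'def]
    field_simp
  have hγZne : ∀ᶠ L : ℕ in atTop, γZ L ≠ 0 := by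
    have hev : ∀ᶠ L : ℕ in atTop, 0 < γZ L / (L:ℝ)^p :=
      hγZ'.eventually (eventually_gt_nhds hc')
    filter_upwards [hev] with L hL
    intro h0
    rw [h0, zero_div] at hL
    exact lt_irrefl _ hL
  -- the three lag-covariance asymptotics
  have hmulγ : ∀ (g : ℕ → ℝ) (C : ℝ), Tendsto (fun L : ℕ => g L / γZ L) atTop (nhds C) →
      Tendsto (fun L : ℕ => g L / (L:ℝ)^p) atTop (nhds (C * c')) := by
    intro g C hg
    have h := hg.mul hγZ'
    refine h.congr' ?_
    filter_upwards [hγZne] with L hL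
    rw [div_mul_div_comm, mul_comm (g L) (γZ L), mul_div_mul_left _ _ hL]
  have hshift : ∀ (g : ℕ → ℝ) (A : ℝ), Tendsto (fun L : ℕ => g L / (L:ℝ)^p) atTop (nhds A) →
      Tendsto (fun i : ℕ => g (i+1) / ((i:ℝ)+1)^p) atTop (nhds A) := by
    intro g A h
    have hcomp := h.comp (tendsto_add_atTop_nat 1)
    refine hcomp.congr fun i => ?_
    simp only [Function.comp]
    push_cast
    ring_nf
  have hg1 := hshift _ _ (hmulγ _ C₁ h1)
  have hg2 := hshift _ _ (hmulγ _ C₂ h2)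
  have hg3 := hshift _ _ (hmulγ _ C₃ h3)
  -- main asymptotics in n
  have hN := numerator_asymp p (C₁*c') hp
    (fun L : ℕ => covar μ (r L) (fun ω => (r 0 ω)^2)) hg1
  have hV2 := variance_asymp p (C₂*c') hp
    (fun L : ℕ => covar μ (r 0) (r L)) hg2
  have hV3 := variance_asymp p (C₃*c') hp
    (fun L : ℕ => covar μ (fun ω => (r 0 ω)^2) (fun ω => (r L ω)^2)) hg3
  set LN : ℝ := (C₁*c') * ((2:ℝ)^(p+2) - 2) / ((p+1)*(p+2)) with hLNdef
  set L2 : ℝ := 2*(C₂*c') / ((p+1)*(p+2)) with hL2def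
  set L3 : ℝ := 2*(C₃*c') / ((p+1)*(p+2)) with hL3def
  have hL2pos : 0 < L2 := by
    rw [hL2def]; exact div_pos (by positivity) (mul_pos hp1pos hp2pos)
  have hL3pos : 0 < L3 := by
    rw [hL3def]; exact div_pos (by positivity) (mul_pos hp1pos hp2pos)
  -- compose with H ↦ H * m
  have hnTop : Tendsto (fun H : ℕ => H * m) atTop atTop := by
    apply tendsto_atTop_mono (fun H => ?_) tendsto_id
    simp only [id_eq]
    calc H = H * 1 := (mul_one H).symm
    _ ≤ H * m := Nat.mul_le_mul_left H hm
  have hNH : Tendsto (fun H : ℕ =>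
      (∑ i ∈ Finset.range (H*m), ∑ k ∈ Finset.range (H*m),
        covar μ (r (↑(i+k+1))) (fun ω => (r 0 ω)^2)) / ((H*m : ℕ):ℝ)^(p+2))
      atTop (nhds LN) := hN.comp hnTop
  have hV2H : Tendsto (fun H : ℕ =>
      (∑ i ∈ Finset.range (H*m), ∑ k ∈ Finset.range (H*m),
        covar μ (r 0) (r (↑(max i k - min i k)))) / ((H*m : ℕ):ℝ)^(p+2))
      atTop (nhds L2) := hV2.comp hnTop
  have hV3H : Tendsto (fun H : ℕ =>
      (∑ i ∈ Finset.range (H*m), ∑ k ∈ Finset.range (H*m),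
        covar μ (fun ω => (r 0 ω)^2) (fun ω => (r (↑(max i k - min i k)) ω)^2))
        / ((H*m : ℕ):ℝ)^(p+2))
      atTop (nhds L3) := hV3.comp hnTop
  -- MemLp facts
  have hr2 : ∀ j : ℤ, MemLp (r j) 2 μ :=
    fun j => (hL4 j).mono_exponent (by norm_num)
  have hq2 : ∀ j : ℤ, MemLp (fun ω => (r j ω)^2) 2 μ := fun j => memℒp_sq (hL4 j)
  -- covariance identities
  have hcovN : ∀ H : ℕ,
      covar μ (fun ω => ∑ j ∈ Finset.Ioc (t * (m : ℤ)) ((t + (H : ℤ)) * (m : ℤ)), r j ω)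
              (fun ω => ∑ j ∈ Finset.Ioc ((t - (H : ℤ)) * (m : ℤ)) (t * (m : ℤ)), (r j ω)^2)
      = ∑ i ∈ Finset.range (H*m), ∑ k ∈ Finset.range (H*m),
          covar μ (r (↑(i+k+1))) (fun ω => (r 0 ω)^2) := by
    intro H
    have e1 : Finset.Ioc (t * (m:ℤ)) ((t + (H:ℤ)) * (m:ℤ))
        = Finset.Ioc (t*(m:ℤ)) (t*(m:ℤ) + ((H*m : ℕ):ℤ)) := by congr 1; push_cast; ring
    have e2 : Finset.Ioc ((t - (H:ℤ)) * (m:ℤ)) (t * (m:ℤ))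
        = Finset.Ioc (t*(m:ℤ) - ((H*m:ℕ):ℤ)) (t*(m:ℤ)) := by congr 1; push_cast; ring
    rw [e1, e2]
    simp_rw [sum_Ioc_shift_up (H*m) (t*(m:ℤ)), sum_Ioc_shift_down (H*m) (t*(m:ℤ))]
    rw [covar_sum_sum (Finset.range (H*m)) (Finset.range (H*m))
      (fun (i : ℕ) (ω : Ω) => r (t*(m:ℤ)+1+(i:ℤ)) ω)
      (fun (k : ℕ) (ω : Ω) => (r (t*(m:ℤ)-(k:ℤ)) ω)^2)
      (fun i _ => hr2 _) (fun k _ => hq2 _)]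
    refine Finset.sum_congr rfl fun i _ => Finset.sum_congr rfl fun k _ => ?_
    have h := hstat3 (t*(m:ℤ) - (k:ℤ)) ((i:ℤ)+(k:ℤ)+1) 0
    rw [zero_add] at h
    rw [show ((i:ℤ)+(k:ℤ)+1 + (t*(m:ℤ) - (k:ℤ))) = t*(m:ℤ)+1+(i:ℤ) by ring] at h
    rw [show ((i+k+1 : ℕ):ℤ) = (i:ℤ)+(k:ℤ)+1 by push_cast; ring]
    exact h
  have hcovR : ∀ H : ℕ,
      covar μ (fun ω => ∑ j ∈ Finset.Ioc (t * (m : ℤ)) ((t + (H : ℤ)) * (m : ℤ)), r j ω)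
              (fun ω => ∑ j ∈ Finset.Ioc (t * (m : ℤ)) ((t + (H : ℤ)) * (m : ℤ)), r j ω)
      = ∑ i ∈ Finset.range (H*m), ∑ k ∈ Finset.range (H*m),
          covar μ (r 0) (r (↑(max i k - min i k))) := by
    intro H
    have e1 : Finset.Ioc (t * (m:ℤ)) ((t + (H:ℤ)) * (m:ℤ))
        = Finset.Ioc (t*(m:ℤ)) (t*(m:ℤ) + ((H*m : ℕ):ℤ)) := by congr 1; push_cast; ring
    rw [e1]
    simp_rw [sum_Ioc_shift_up (H*m) (t*(m:ℤ))]
    rw [covar_sum_sum (Finset.range (H*m)) (Finset.range (H*m))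
      (fun (i : ℕ) (ω : Ω) => r (t*(m:ℤ)+1+(i:ℤ)) ω)
      (fun (k : ℕ) (ω : Ω) => r (t*(m:ℤ)+1+(k:ℤ)) ω)
      (fun i _ => hr2 _) (fun k _ => hr2 _)]
    refine Finset.sum_congr rfl fun i _ => Finset.sum_congr rfl fun k _ => ?_
    rcases le_total i k with hik | hik
    · have h := hstat1 (t*(m:ℤ)+1+(i:ℤ)) 0 ((k:ℤ)-(i:ℤ))
      rw [zero_add] at h
      rw [show ((k:ℤ)-(i:ℤ) + (t*(m:ℤ)+1+(i:ℤ))) = t*(m:ℤ)+1+(k:ℤ) by ring] at h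
      rw [max_eq_right hik, min_eq_left hik]
      rw [show ((k - i : ℕ):ℤ) = (k:ℤ)-(i:ℤ) by omega]
      exact h
    · have h := hstat1 (t*(m:ℤ)+1+(k:ℤ)) 0 ((i:ℤ)-(k:ℤ))
      rw [zero_add] at h
      rw [show ((i:ℤ)-(k:ℤ) + (t*(m:ℤ)+1+(k:ℤ))) = t*(m:ℤ)+1+(i:ℤ) by ring] at h
      rw [max_eq_left hik, min_eq_right hik]
      rw [show ((i - k : ℕ):ℤ) = (i:ℤ)-(k:ℤ) by omega]
      rw [covar_comm]
      exact h
  have hcovRV : ∀ H : ℕ,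
      covar μ (fun ω => ∑ j ∈ Finset.Ioc ((t - (H : ℤ)) * (m : ℤ)) (t * (m : ℤ)), (r j ω)^2)
              (fun ω => ∑ j ∈ Finset.Ioc ((t - (H : ℤ)) * (m : ℤ)) (t * (m : ℤ)), (r j ω)^2)
      = ∑ i ∈ Finset.range (H*m), ∑ k ∈ Finset.range (H*m),
          covar μ (fun ω => (r 0 ω)^2) (fun ω => (r (↑(max i k - min i k)) ω)^2) := by
    intro H
    have e2 : Finset.Ioc ((t - (H:ℤ)) * (m:ℤ)) (t * (m:ℤ))
        = Finset.Ioc (t*(m:ℤ) - ((H*m:ℕ):ℤ)) (t*(m:ℤ)) := by congr 1; push_cast; ring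
    rw [e2]
    simp_rw [sum_Ioc_shift_down (H*m) (t*(m:ℤ))]
    rw [covar_sum_sum (Finset.range (H*m)) (Finset.range (H*m))
      (fun (i : ℕ) (ω : Ω) => (r (t*(m:ℤ)-(i:ℤ)) ω)^2)
      (fun (k : ℕ) (ω : Ω) => (r (t*(m:ℤ)-(k:ℤ)) ω)^2)
      (fun i _ => hq2 _) (fun k _ => hq2 _)]
    refine Finset.sum_congr rfl fun i _ => Finset.sum_congr rfl fun k _ => ?_
    rcases le_total k i with hik | hik
    · have h := hstat2 (t*(m:ℤ)-(i:ℤ)) 0 ((i:ℤ)-(k:ℤ))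
      rw [zero_add] at h
      rw [show ((i:ℤ)-(k:ℤ) + (t*(m:ℤ)-(i:ℤ))) = t*(m:ℤ)-(k:ℤ) by ring] at h
      rw [max_eq_left hik, min_eq_right hik]
      rw [show ((i - k : ℕ):ℤ) = (i:ℤ)-(k:ℤ) by omega]
      exact h
    · have h := hstat2 (t*(m:ℤ)-(k:ℤ)) 0 ((k:ℤ)-(i:ℤ))
      rw [zero_add] at h
      rw [show ((k:ℤ)-(i:ℤ) + (t*(m:ℤ)-(k:ℤ))) = t*(m:ℤ)-(i:ℤ) by ring] at h
      rw [max_eq_right hik, min_eq_left hik]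
      rw [show ((k - i : ℕ):ℤ) = (k:ℤ)-(i:ℤ) by omega]
      rw [covar_comm]
      exact h
  -- assemble the limit
  have hdenom : Tendsto (fun H : ℕ => Real.sqrt
      (((∑ i ∈ Finset.range (H*m), ∑ k ∈ Finset.range (H*m),
          covar μ (r 0) (r (↑(max i k - min i k)))) / ((H*m : ℕ):ℝ)^(p+2))
       * ((∑ i ∈ Finset.range (H*m), ∑ k ∈ Finset.range (H*m),
          covar μ (fun ω => (r 0 ω)^2) (fun ω => (r (↑(max i k - min i k)) ω)^2))
          / ((H*m : ℕ):ℝ)^(p+2))))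
      atTop (nhds (Real.sqrt (L2 * L3))) :=
    (Real.continuous_sqrt.tendsto _).comp (hV2H.mul hV3H)
  have hsqrtne : Real.sqrt (L2 * L3) ≠ 0 :=
    (Real.sqrt_pos.mpr (mul_pos hL2pos hL3pos)).ne'
  have hratio := hNH.div hdenom hsqrtne
  -- final value computation
  have hsq : Real.sqrt (L2 * L3) = 2*(C₁*c') / ((p+1)*(p+2)) := by
    have e : L2 * L3 = (2*(C₁*c') / ((p+1)*(p+2)))^2 := by
      rw [hL2def, hL3def]
      rw [div_mul_div_comm, div_pow]
      congr 1
      · linear_combination (-(c^2*d⁻¹^2*(d+d^2+1/4)))*hCsq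
      · ring
    rw [e, Real.sqrt_sq]
    exact le_of_lt (div_pos (by positivity) (mul_pos hp1pos hp2pos))
  have hval : LN / Real.sqrt (L2 * L3) = (2:ℝ)^(2*d) - 1 := by
    rw [hsq, hLNdef]
    have hpow : (2:ℝ)^(p+2) = 2 * (2:ℝ)^(2*d) := by
      rw [show p + 2 = 2*d + 1 by rw [hpdef]; ring]
      rw [Real.rpow_add (by norm_num), Real.rpow_one]
      ring
    rw [hpow]
    have hD : ((p+1)*(p+2)) ≠ 0 := (mul_pos hp1pos hp2pos).ne'
    field_simp
  rw [← hval]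
  refine Tendsto.congr' ?_ hratio
  filter_upwards [eventually_ge_atTop 1] with H hH
  simp only [Pi.div_apply]
  beta_reduce
  rw [hcovN H, hcovR H, hcovRV H]
  have hnm : (1:ℕ) ≤ H*m := Nat.one_le_iff_ne_zero.mpr (by positivity)
  have hPpos : (0:ℝ) < ((H*m : ℕ):ℝ)^(p+2) := by
    apply Real.rpow_pos_of_pos
    exact_mod_cast Nat.lt_of_lt_of_le Nat.zero_lt_one hnm
  set P : ℝ := ((H*m : ℕ):ℝ)^(p+2) with hPdef
  set S1 : ℝ := ∑ i ∈ Finset.range (H*m), ∑ k ∈ Finset.range (H*m),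
    covar μ (r (↑(i+k+1))) (fun ω => (r 0 ω)^2) with hS1def
  set S2 : ℝ := ∑ i ∈ Finset.range (H*m), ∑ k ∈ Finset.range (H*m),
    covar μ (r 0) (r (↑(max i k - min i k))) with hS2def
  set S3 : ℝ := ∑ i ∈ Finset.range (H*m), ∑ k ∈ Finset.range (H*m),
    covar μ (fun ω => (r 0 ω)^2) (fun ω => (r (↑(max i k - min i k)) ω)^2) with hS3def
  rw [show (S2/P)*(S3/P) = (S2*S3)*(P⁻¹)^2 by ring]
  rw [Real.sqrt_mul' _ (sq_nonneg _)]
  rw [Real.sqrt_sq (inv_nonneg.mpr hPpos.le)]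
  rw [div_eq_mul_inv S1 P]
  exact mul_div_mul_right S1 (Real.sqrt (S2*S3)) (inv_ne_zero hPpos.ne')
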